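/- arXiv:1509.06701 — 2 statements merged into one kernel-verified Lean document; each statement's English description precedes it below -/
import Mathlib

section
/- Let Γ ∼ ε_p be an Erdős–Rényi random graph with parameter p ∈ [0,1]. Then for every finite graph F on [m], the limiting density δ(F,Γ) = lim_{n→∞} ind(F, Γ|[n])/n^{↓m} exists almost surely and equals ∏_{1≤i<j≤m} p^{F(i,j)} (1-p)^{1-F(i,j)}; in particular the graph limit of Γ is deterministic. -/
open MeasureTheory

/-- A countable graph: a symmetric `{0,1}`-valued array on `ℕ × ℕ` with zero diagonal. -/
def CGraph : Type := {f : ℕ → ℕ → Bool // (∀ i j, f i j = f j i) ∧ ∀ i, f i i = false}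

instance : MeasurableSpace CGraph := by unfold CGraph; infer_instance

instance : TopologicalSpace CGraph := by unfold CGraph; infer_instance

/-- A finite graph on vertex set `[n]`. -/
def FinGraph (n : ℕ) : Type :=
  {f : Fin n → Fin n → Bool // (∀ i j, f i j = f j i) ∧ ∀ i, f i i = false}

/-- The restriction `G|[n]` of a countable graph to its first `n` vertices. -/
def restrictG (n : ℕ) (G : CGraph) : FinGraph n :=
  ⟨fun i j => G.1 i j, fun i j => G.2.1 _ _, fun i => G.2.2 _⟩

/-- Index type for the upper-triangular pairs `(i,j)`, `i < j`. -/
def UPair : Type := {q : ℕ × ℕ // q.1 < q.2}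

/-- The event that the edge `q` is present. -/
def edgeEvent (q : UPair) : Set CGraph := {G : CGraph | G.1 q.1.1 q.1.2 = true}

/-- The number of embeddings of `F` (on `[m]`) into `G` (on `[n]`). -/
noncomputable def ind {m n : ℕ} (F : FinGraph m) (G : FinGraph n) : ℕ :=
  Fintype.card {φ : Fin m ↪ Fin n // ∀ i j, G.1 (φ i) (φ j) = F.1 i j}

namespace ERGL

/-- make the unordered pair -/
def mkUPair (a b : ℕ) : UPair :=
  if h : a < b then ⟨(a, b), h⟩ else if h' : b < a then ⟨(b, a), h'⟩ else ⟨(0, 1), Nat.one_pos⟩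

lemma mkUPair_fst {a b : ℕ} (hab : a ≠ b) : (mkUPair a b).1.1 = min a b := by
  by_cases h : a < b
  · rw [show mkUPair a b = ⟨(a, b), h⟩ from dif_pos h]; show a = min a b; omega
  · have h' : b < a := by omega
    rw [show mkUPair a b = ⟨(b, a), h'⟩ from (dif_neg h).trans (dif_pos h')]; show b = min a b; omega

lemma mkUPair_snd {a b : ℕ} (hab : a ≠ b) : (mkUPair a b).1.2 = max a b := by
  by_cases h : a < b
  · rw [show mkUPair a b = ⟨(a, b), h⟩ from dif_pos h]; show b = max a b; omega
  · have h' : b < a := by omega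
    rw [show mkUPair a b = ⟨(b, a), h'⟩ from (dif_neg h).trans (dif_pos h')]; show a = max a b; omega

lemma mkUPair_eq_iff {a b c d : ℕ} (hab : a ≠ b) (hcd : c ≠ d)
    (h : mkUPair a b = mkUPair c d) : (a = c ∧ b = d) ∨ (a = d ∧ b = c) := by
  have h1 := congrArg (fun q : UPair => q.1.1) h
  have h2 := congrArg (fun q : UPair => q.1.2) h
  simp only [mkUPair_fst hab, mkUPair_fst hcd, mkUPair_snd hab, mkUPair_snd hcd] at h1 h2
  omega

lemma measurable_eval (a b : ℕ) : Measurable fun G : CGraph => G.1 a b := by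
  have h1 : Measurable fun G : CGraph => (G.1 : ℕ → ℕ → Bool) := by
    unfold CGraph
    exact measurable_subtype_coe
  exact ((measurable_pi_apply b).comp ((measurable_pi_apply a).comp h1))

def C (q : UPair) (c : Bool) : Set CGraph := {G | G.1 q.1.1 q.1.2 = c}

lemma measurableSet_C (q : UPair) (c : Bool) : MeasurableSet (C q c) :=
  (measurable_eval q.1.1 q.1.2) (MeasurableSet.singleton c)

lemma C_true (q : UPair) : C q true = edgeEvent q := rfl

lemma C_false (q : UPair) : C q false = (edgeEvent q)ᶜ := by
  ext G
  simp [C, edgeEvent]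

lemma eval_mkUPair (G : CGraph) {a b : ℕ} (hab : a ≠ b) :
    G.1 (mkUPair a b).1.1 (mkUPair a b).1.2 = G.1 a b := by
  by_cases h : a < b
  · rw [show mkUPair a b = ⟨(a, b), h⟩ from dif_pos h]
  · have h' : b < a := by omega
    rw [show mkUPair a b = ⟨(b, a), h'⟩ from (dif_neg h).trans (dif_pos h')]; exact G.2.1 b a

end ERGL
namespace ERGL

variable {p : ℝ} {μ : Measure CGraph} [IsProbabilityMeasure μ]

lemma meas_C (hp0 : 0 ≤ p)
    (hmarg : ∀ q : UPair, μ (edgeEvent q) = ENNReal.ofReal p)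
    (q : UPair) (c : Bool) :
    μ (C q c) = ENNReal.ofReal (if c then p else 1 - p) := by
  cases c
  · rw [C_false, prob_compl_eq_one_sub (C_true q ▸ measurableSet_C q true), hmarg]
    rw [if_neg (by simp), ENNReal.ofReal_sub _ hp0, ENNReal.ofReal_one]
  · rw [C_true]; simpa using hmarg q

lemma meas_biInter_C (hp0 : 0 ≤ p)
    (hind : ProbabilityTheory.iIndepSet edgeEvent μ)
    (hmarg : ∀ q : UPair, μ (edgeEvent q) = ENNReal.ofReal p)
    (s : Finset UPair) (bb : UPair → Bool) :
    μ (⋂ q ∈ s, C q (bb q)) = ∏ q ∈ s, ENNReal.ofReal (if bb q then p else 1 - p) := by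
  have hin : ProbabilityTheory.iIndep
      (fun q : UPair => MeasurableSpace.generateFrom {edgeEvent q}) μ := hind
  have h := hin.meas_biInter (S := s) (s := fun q => C q (bb q)) ?_
  · rw [h]
    exact Finset.prod_congr rfl fun q _ => meas_C hp0 hmarg q (bb q)
  · intro q _
    show MeasurableSet[MeasurableSpace.generateFrom {edgeEvent q}] (C q (bb q))
    cases hbq : bb q
    · rw [C_false]
      exact (MeasurableSpace.measurableSet_generateFrom (Set.mem_singleton _)).compl
    · rw [C_true]
      exact MeasurableSpace.measurableSet_generateFrom (Set.mem_singleton _)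

end ERGL
namespace ERGL

instance : DecidableEq UPair := by unfold UPair; infer_instance

def pairs (m : ℕ) : Finset (Fin m × Fin m) := Finset.univ.filter fun q => q.1 < q.2

variable {m n : ℕ}

def A (F : FinGraph m) (φ : Fin m ↪ Fin n) : Set CGraph :=
  {G | ∀ i j, G.1 (φ i) (φ j) = F.1 i j}

def P (φ : Fin m ↪ Fin n) : Finset UPair :=
  (pairs m).image fun r => mkUPair (φ r.1) (φ r.2)

lemma phi_ne (φ : Fin m ↪ Fin n) {i j : Fin m} (h : i ≠ j) : (φ i : ℕ) ≠ (φ j : ℕ) :=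
  fun he => h (φ.injective (Fin.val_injective he))

lemma mkUPair_phi_inj (φ : Fin m ↪ Fin n) {r r' : Fin m × Fin m}
    (hr : r ∈ pairs m) (hr' : r' ∈ pairs m)
    (h : mkUPair (φ r.1) (φ r.2) = mkUPair (φ r'.1) (φ r'.2)) : r = r' := by
  simp only [pairs, Finset.mem_filter, Finset.mem_univ, true_and] at hr hr'
  have h1 : (φ r.1 : ℕ) ≠ (φ r.2 : ℕ) := phi_ne φ (Fin.ne_of_lt hr)
  have h2 : (φ r'.1 : ℕ) ≠ (φ r'.2 : ℕ) := phi_ne φ (Fin.ne_of_lt hr')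
  rcases mkUPair_eq_iff h1 h2 h with ⟨e1, e2⟩ | ⟨e1, e2⟩
  · have g1 : r.1 = r'.1 := φ.injective (Fin.val_injective e1)
    have g2 : r.2 = r'.2 := φ.injective (Fin.val_injective e2)
    exact Prod.ext g1 g2
  · have g1 : r.1 = r'.2 := φ.injective (Fin.val_injective e1)
    have g2 : r.2 = r'.1 := φ.injective (Fin.val_injective e2)
    exfalso
    rw [g1] at hr; rw [← g2] at hr'
    exact absurd (hr'.trans hr) (lt_irrefl _)

open Classical in
noncomputable def bval (F : FinGraph m) (φ : Fin m ↪ Fin n) (q : UPair) : Bool :=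
  if ∃ r ∈ pairs m, mkUPair (φ r.1) (φ r.2) = q ∧ F.1 r.1 r.2 = true then true else false

lemma bval_eq (F : FinGraph m) (φ : Fin m ↪ Fin n) {r : Fin m × Fin m} (hr : r ∈ pairs m) :
    bval F φ (mkUPair (φ r.1) (φ r.2)) = F.1 r.1 r.2 := by
  unfold bval
  split_ifs with h
  · obtain ⟨r', hr', he, hF⟩ := h
    rw [← mkUPair_phi_inj φ hr' hr he]
    exact hF.symm
  · cases hF : F.1 r.1 r.2
    · rfl
    · exact absurd ⟨r, hr, rfl, hF⟩ h

lemma mem_pairs {r : Fin m × Fin m} : r ∈ pairs m ↔ r.1 < r.2 := by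
  simp [pairs]

lemma A_eq (F : FinGraph m) (φ : Fin m ↪ Fin n) :
    A F φ = ⋂ q ∈ P φ, C q (bval F φ q) := by
  ext G
  simp only [A, Set.mem_setOf_eq, Set.mem_iInter, P, Finset.mem_image]
  constructor
  · rintro h q ⟨r, hr, rfl⟩
    have hne : (φ r.1 : ℕ) ≠ (φ r.2 : ℕ) := phi_ne φ (Fin.ne_of_lt (mem_pairs.mp hr))
    show G.1 _ _ = _
    rw [eval_mkUPair G hne, bval_eq F φ hr, h]
  · intro h i j
    rcases lt_trichotomy i j with hij | rfl | hij
    · have hr : (i, j) ∈ pairs m := mem_pairs.mpr hij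
      have := h _ ⟨(i, j), hr, rfl⟩
      rw [C, Set.mem_setOf_eq, eval_mkUPair G (phi_ne φ (Fin.ne_of_lt hij)),
        bval_eq F φ hr] at this
      exact this
    · rw [G.2.2, F.2.2]
    · have hr : (j, i) ∈ pairs m := mem_pairs.mpr hij
      have := h _ ⟨(j, i), hr, rfl⟩
      rw [C, Set.mem_setOf_eq, eval_mkUPair G (phi_ne φ (Fin.ne_of_lt hij)),
        bval_eq F φ hr] at this
      rw [G.2.1, F.2.1]
      exact this

lemma measurableSet_A (F : FinGraph m) (φ : Fin m ↪ Fin n) : MeasurableSet (A F φ) := by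
  rw [A_eq]
  exact Finset.measurableSet_biInter _ fun q _ => measurableSet_C q _

variable {p : ℝ} {μ : Measure CGraph} [IsProbabilityMeasure μ]

lemma meas_A (hp0 : 0 ≤ p)
    (hind : ProbabilityTheory.iIndepSet edgeEvent μ)
    (hmarg : ∀ q : UPair, μ (edgeEvent q) = ENNReal.ofReal p)
    (F : FinGraph m) (φ : Fin m ↪ Fin n) :
    μ (A F φ) = ∏ r ∈ pairs m, ENNReal.ofReal (if F.1 r.1 r.2 then p else 1 - p) := by
  rw [A_eq, meas_biInter_C hp0 hind hmarg]
  unfold P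
  rw [Finset.prod_image fun r hr r' hr' h => mkUPair_phi_inj φ hr hr' h]
  exact Finset.prod_congr rfl fun r hr => by rw [bval_eq F φ hr]

lemma meas_A_inter (hp0 : 0 ≤ p)
    (hind : ProbabilityTheory.iIndepSet edgeEvent μ)
    (hmarg : ∀ q : UPair, μ (edgeEvent q) = ENNReal.ofReal p)
    (F : FinGraph m) (φ ψ : Fin m ↪ Fin n) (hd : Disjoint (P φ) (P ψ)) :
    μ (A F φ ∩ A F ψ) = μ (A F φ) * μ (A F ψ) := by
  classical
  set bb : UPair → Bool := fun q => if q ∈ P φ then bval F φ q else bval F ψ q with hbb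
  have h1 : A F φ = ⋂ q ∈ P φ, C q (bb q) := by
    rw [A_eq]
    exact Set.iInter₂_congr fun q hq => by rw [hbb]; simp only [if_pos hq]
  have h2 : A F ψ = ⋂ q ∈ P ψ, C q (bb q) := by
    rw [A_eq]
    refine Set.iInter₂_congr fun q hq => ?_
    rw [hbb]; simp only [if_neg (Finset.disjoint_right.mp hd hq)]
  have h3 : A F φ ∩ A F ψ = ⋂ q ∈ P φ ∪ P ψ, C q (bb q) := by
    rw [h1, h2]
    ext G
    simp only [Set.mem_inter_iff, Set.mem_iInter, Finset.mem_union, or_imp, forall_and]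
  rw [h3, h1, h2, meas_biInter_C hp0 hind hmarg, meas_biInter_C hp0 hind hmarg,
    meas_biInter_C hp0 hind hmarg, Finset.prod_union hd]

end ERGL
namespace ERGL

variable {m n : ℕ} {p : ℝ} {μ : Measure CGraph} [IsProbabilityMeasure μ]

/-- The limiting density. -/
noncomputable def theta (p : ℝ) {m : ℕ} (F : FinGraph m) : ℝ :=
  ∏ r ∈ pairs m, (if F.1 r.1 r.2 then p else 1 - p)

lemma theta_nonneg (hp0 : 0 ≤ p) (hp1 : p ≤ 1) (F : FinGraph m) : 0 ≤ theta p F :=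
  Finset.prod_nonneg fun r _ => by split_ifs <;> linarith

lemma theta_le_one (hp0 : 0 ≤ p) (hp1 : p ≤ 1) (F : FinGraph m) : theta p F ≤ 1 :=
  Finset.prod_le_one (fun r _ => by split_ifs <;> linarith)
    (fun r _ => by split_ifs <;> linarith)

lemma meas_A_toReal (hp0 : 0 ≤ p) (hp1 : p ≤ 1)
    (hind : ProbabilityTheory.iIndepSet edgeEvent μ)
    (hmarg : ∀ q : UPair, μ (edgeEvent q) = ENNReal.ofReal p)
    (F : FinGraph m) (φ : Fin m ↪ Fin n) :
    (μ (A F φ)).toReal = theta p F := by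
  rw [meas_A hp0 hind hmarg, ENNReal.toReal_prod]
  exact Finset.prod_congr rfl fun r _ =>
    ENNReal.toReal_ofReal (by split_ifs <;> linarith)

/-- The (real-valued) number of embeddings of `F` into `G|[n]`. -/
noncomputable def X (F : FinGraph m) (n : ℕ) (G : CGraph) : ℝ :=
  ∑ φ : Fin m ↪ Fin n, Set.indicator (A F φ) (fun _ => (1 : ℝ)) G

lemma restrictG_apply (G : CGraph) (i j : Fin n) : (restrictG n G).1 i j = G.1 i j := rfl

lemma ind_eq (F : FinGraph m) (n : ℕ) (G : CGraph) :
    (ind F (restrictG n G) : ℝ) = X F n G := by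
  classical
  unfold ind X
  rw [Fintype.card_subtype]
  rw [Finset.card_filter]
  push_cast
  refine Finset.sum_congr rfl fun φ _ => ?_
  simp only [restrictG_apply, Set.indicator_apply]
  by_cases h : ∀ i j, G.1 (φ i) (φ j) = F.1 i j
  · rw [if_pos (show G ∈ A F φ from h)]; exact if_pos h
  · rw [if_neg (show G ∉ A F φ from h)]; exact if_neg h

lemma integrable_indicator_A (F : FinGraph m) (φ : Fin m ↪ Fin n) :
    Integrable (Set.indicator (A F φ) (fun _ => (1 : ℝ))) μ :=
  (integrable_const (1 : ℝ)).indicator (measurableSet_A F φ)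

lemma integrable_X (F : FinGraph m) (n : ℕ) :
    Integrable (X F n) μ :=
  MeasureTheory.integrable_finset_sum _ fun φ _ => integrable_indicator_A F φ

lemma measurable_X (F : FinGraph m) (n : ℕ) : Measurable (X F n) :=
  Finset.measurable_sum _ fun φ _ =>
    (measurable_const.indicator (measurableSet_A F φ))

lemma integral_X (hp0 : 0 ≤ p) (hp1 : p ≤ 1)
    (hind : ProbabilityTheory.iIndepSet edgeEvent μ)
    (hmarg : ∀ q : UPair, μ (edgeEvent q) = ENNReal.ofReal p)
    (F : FinGraph m) (n : ℕ) :
    ∫ G, X F n G ∂μ = (n.descFactorial m : ℝ) * theta p F := by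
  unfold X
  rw [MeasureTheory.integral_finset_sum _ fun φ _ => integrable_indicator_A F φ]
  have : ∀ φ : Fin m ↪ Fin n,
      ∫ G, Set.indicator (A F φ) (fun _ => (1 : ℝ)) G ∂μ = theta p F := by
    intro φ
    rw [integral_indicator_const (1 : ℝ) (measurableSet_A F φ),
      measureReal_def, meas_A_toReal hp0 hp1 hind hmarg, smul_eq_mul, mul_one]
  rw [Finset.sum_congr rfl fun φ _ => this φ, Finset.sum_const, Finset.card_univ,
    Fintype.card_embedding_eq, Fintype.card_fin, Fintype.card_fin, nsmul_eq_mul]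

lemma integrable_indicator_inter (F : FinGraph m) (φ ψ : Fin m ↪ Fin n) :
    Integrable (Set.indicator (A F φ ∩ A F ψ) (fun _ => (1 : ℝ))) μ :=
  (integrable_const (1 : ℝ)).indicator ((measurableSet_A F φ).inter (measurableSet_A F ψ))

lemma X_sq (F : FinGraph m) (n : ℕ) (G : CGraph) :
    X F n G ^ 2 = ∑ z : (Fin m ↪ Fin n) × (Fin m ↪ Fin n),
      Set.indicator (A F z.1 ∩ A F z.2) (fun _ => (1 : ℝ)) G := by
  rw [sq]
  unfold X
  rw [Finset.sum_mul_sum, ← Finset.sum_product']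
  refine Finset.sum_congr rfl fun z _ => ?_
  rw [← Set.inter_indicator_mul]
  simp

lemma integral_X_sq (F : FinGraph m) (n : ℕ) :
    ∫ G, X F n G ^ 2 ∂μ = ∑ z : (Fin m ↪ Fin n) × (Fin m ↪ Fin n),
      (μ (A F z.1 ∩ A F z.2)).toReal := by
  rw [MeasureTheory.integral_congr_ae (Filter.Eventually.of_forall (X_sq F n)),
    MeasureTheory.integral_finset_sum _ fun z _ => integrable_indicator_inter F z.1 z.2]
  refine Finset.sum_congr rfl fun z _ => ?_
  rw [integral_indicator_const (1 : ℝ) ((measurableSet_A F z.1).inter (measurableSet_A F z.2)),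
    smul_eq_mul, mul_one, measureReal_def]

lemma integrable_X_sq (F : FinGraph m) (n : ℕ) :
    Integrable (fun G => X F n G ^ 2) μ := by
  refine (MeasureTheory.integrable_finset_sum (μ := μ)
      (Finset.univ : Finset ((Fin m ↪ Fin n) × (Fin m ↪ Fin n))) ?_).congr
    (Filter.Eventually.of_forall fun G => (X_sq F n G).symm)
  exact fun z _ => integrable_indicator_inter F z.1 z.2

end ERGL
namespace ERGL

variable {m n : ℕ} {p : ℝ} {μ : Measure CGraph} [IsProbabilityMeasure μ]

lemma var_eq (hp0 : 0 ≤ p) (hp1 : p ≤ 1)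
    (hind : ProbabilityTheory.iIndepSet edgeEvent μ)
    (hmarg : ∀ q : UPair, μ (edgeEvent q) = ENNReal.ofReal p)
    (F : FinGraph m) (n : ℕ) :
    ∫ G, (X F n G - (n.descFactorial m : ℝ) * theta p F) ^ 2 ∂μ =
      (∑ z : (Fin m ↪ Fin n) × (Fin m ↪ Fin n), (μ (A F z.1 ∩ A F z.2)).toReal) -
        ((n.descFactorial m : ℝ) * theta p F) ^ 2 := by
  set c := (n.descFactorial m : ℝ) * theta p F with hc
  have hexp : ∀ G, (X F n G - c) ^ 2 = X F n G ^ 2 - 2 * c * X F n G + c ^ 2 := by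
    intro G; ring
  have e1 : ∫ G, (X F n G - c) ^ 2 ∂μ
      = ∫ G, (X F n G ^ 2 - 2 * c * X F n G + c ^ 2) ∂μ :=
    MeasureTheory.integral_congr_ae (Filter.Eventually.of_forall hexp)
  have i1 : Integrable (fun G => X F n G ^ 2 - 2 * c * X F n G) μ :=
    (integrable_X_sq F n).sub ((integrable_X F n).const_mul (2 * c))
  rw [e1, MeasureTheory.integral_add i1 (integrable_const _),
    MeasureTheory.integral_sub (integrable_X_sq F n) ((integrable_X F n).const_mul (2 * c)),
    integral_const_mul, integral_X hp0 hp1 hind hmarg, ← hc,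
    integral_X_sq, MeasureTheory.integral_const, probReal_univ, one_smul]
  ring

lemma toReal_le_one (s : Set CGraph) : (μ s).toReal ≤ 1 :=
  ENNReal.toReal_le_of_le_ofReal zero_le_one (by simpa using prob_le_one)

lemma sum_le (hp0 : 0 ≤ p) (hp1 : p ≤ 1)
    (hind : ProbabilityTheory.iIndepSet edgeEvent μ)
    (hmarg : ∀ q : UPair, μ (edgeEvent q) = ENNReal.ofReal p)
    (F : FinGraph m) (n : ℕ) :
    (∑ z : (Fin m ↪ Fin n) × (Fin m ↪ Fin n), (μ (A F z.1 ∩ A F z.2)).toReal) ≤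
      ((n.descFactorial m : ℝ) * theta p F) ^ 2 +
      ((Finset.univ.filter
        (fun z : (Fin m ↪ Fin n) × (Fin m ↪ Fin n) => ¬ Disjoint (P z.1) (P z.2))).card : ℝ) := by
  classical
  set E2 := (Fin m ↪ Fin n) × (Fin m ↪ Fin n)
  set f : E2 → ℝ := fun z => (μ (A F z.1 ∩ A F z.2)).toReal with hf
  rw [← Finset.sum_filter_add_sum_filter_not Finset.univ
    (fun z : E2 => Disjoint (P z.1) (P z.2)) f]
  have h1 : ∑ z ∈ Finset.univ.filter (fun z : E2 => Disjoint (P z.1) (P z.2)), f z ≤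
      ((n.descFactorial m : ℝ) * theta p F) ^ 2 := by
    have : ∀ z ∈ Finset.univ.filter (fun z : E2 => Disjoint (P z.1) (P z.2)),
        f z = theta p F ^ 2 := by
      intro z hz
      show (μ (A F z.1 ∩ A F z.2)).toReal = theta p F ^ 2
      simp only [Finset.mem_filter] at hz
      rw [meas_A_inter hp0 hind hmarg F z.1 z.2 hz.2, ENNReal.toReal_mul,
        meas_A_toReal hp0 hp1 hind hmarg, meas_A_toReal hp0 hp1 hind hmarg, sq]
    rw [Finset.sum_congr rfl this, Finset.sum_const, nsmul_eq_mul]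
    have hcard : ((Finset.univ.filter (fun z : E2 => Disjoint (P z.1) (P z.2))).card : ℝ) ≤
        ((n.descFactorial m : ℝ)) ^ 2 := by
      have := Finset.card_filter_le (Finset.univ : Finset E2)
        (fun z : E2 => Disjoint (P z.1) (P z.2))
      have hcu : (Finset.univ : Finset E2).card = (n.descFactorial m) ^ 2 := by
        rw [Finset.card_univ]
        simp [E2, Fintype.card_prod, Fintype.card_embedding_eq, sq]
      calc ((Finset.univ.filter (fun z : E2 => Disjoint (P z.1) (P z.2))).card : ℝ)
          ≤ ((Finset.univ : Finset E2).card : ℝ) := by exact_mod_cast this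
        _ = ((n.descFactorial m : ℝ)) ^ 2 := by rw [hcu]; push_cast; ring
    calc ((Finset.univ.filter (fun z : E2 => Disjoint (P z.1) (P z.2))).card : ℝ) * theta p F ^ 2
        ≤ ((n.descFactorial m : ℝ)) ^ 2 * theta p F ^ 2 := by
          apply mul_le_mul_of_nonneg_right hcard (sq_nonneg _)
      _ = ((n.descFactorial m : ℝ) * theta p F) ^ 2 := by ring
  have h2 : ∑ z ∈ Finset.univ.filter (fun z : E2 => ¬ Disjoint (P z.1) (P z.2)), f z ≤
      ((Finset.univ.filter (fun z : E2 => ¬ Disjoint (P z.1) (P z.2))).card : ℝ) := by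
    calc ∑ z ∈ Finset.univ.filter (fun z : E2 => ¬ Disjoint (P z.1) (P z.2)), f z
        ≤ ∑ _z ∈ Finset.univ.filter (fun z : E2 => ¬ Disjoint (P z.1) (P z.2)), (1 : ℝ) :=
          Finset.sum_le_sum fun z _ => toReal_le_one _
      _ = _ := by rw [Finset.sum_const, nsmul_eq_mul, mul_one]
  linarith

end ERGL
namespace ERGL

variable {m n : ℕ}

lemma fiber_card_le (i j i' j' : Fin m) (hij : i' < j') :
    (Finset.univ.filter fun z : (Fin m ↪ Fin n) × (Fin m ↪ Fin n) =>
      z.1 i = z.2 i' ∧ z.1 j = z.2 j').card ≤ n.descFactorial m * n ^ (m - 2) := by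
  classical
  set s : Finset (Fin m) := {i', j'} with hs
  have hcs : s.card = 2 := Finset.card_pair (Fin.ne_of_lt hij)
  set f : (Fin m ↪ Fin n) × (Fin m ↪ Fin n) → (Fin m ↪ Fin n) × (↥(sᶜ : Finset (Fin m)) → Fin n) :=
    fun z => (z.1, fun x => z.2 x.1) with hf
  have hinj : Set.InjOn f (Finset.univ.filter fun z : (Fin m ↪ Fin n) × (Fin m ↪ Fin n) =>
      z.1 i = z.2 i' ∧ z.1 j = z.2 j') := by
    intro z hz w hw he
    simp only [Finset.coe_filter, Set.mem_setOf_eq] at hz hw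
    have h1 : z.1 = w.1 := congrArg (fun t => t.1) he
    have h2 : ∀ x : Fin m, x ∈ (sᶜ : Finset (Fin m)) → z.2 x = w.2 x := by
      intro x hx
      have := congrArg (fun t => t.2) he
      exact congrFun this ⟨x, hx⟩
    have h3 : z.2 = w.2 := by
      ext x
      by_cases hxi : x = i'
      · subst hxi
        rw [← hz.2.1, ← hw.2.1, h1]
      · by_cases hxj : x = j'
        · subst hxj
          rw [← hz.2.2, ← hw.2.2, h1]
        · have hx : x ∈ (sᶜ : Finset (Fin m)) := by
            simp [hs, hxi, hxj]
          exact congrArg Fin.val (h2 x hx)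
    exact Prod.ext h1 h3
  have hcard := Finset.card_le_card_of_injOn f (fun z _ => Finset.mem_univ (f z)) hinj
  calc (Finset.univ.filter fun z : (Fin m ↪ Fin n) × (Fin m ↪ Fin n) =>
        z.1 i = z.2 i' ∧ z.1 j = z.2 j').card
      ≤ (Finset.univ : Finset ((Fin m ↪ Fin n) × (↥(sᶜ : Finset (Fin m)) → Fin n))).card :=
        hcard
    _ = n.descFactorial m * n ^ (m - 2) := by
        rw [Finset.card_univ, Fintype.card_prod, Fintype.card_embedding_eq, Fintype.card_fin,
          Fintype.card_fin, Fintype.card_fun]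
        congr 1
        rw [Fintype.card_fin]
        congr 1
        rw [Fintype.card_coe, Finset.card_compl, hcs, Fintype.card_fin]

lemma bad_card_le :
    ((Finset.univ.filter fun z : (Fin m ↪ Fin n) × (Fin m ↪ Fin n) =>
        ¬ Disjoint (P z.1) (P z.2)).card) ≤
      ((Finset.univ.filter fun x : (Fin m × Fin m) × (Fin m × Fin m) => x.2.1 < x.2.2).card)
        * (n.descFactorial m * n ^ (m - 2)) := by
  classical
  set quad := Finset.univ.filter
    fun x : (Fin m × Fin m) × (Fin m × Fin m) => x.2.1 < x.2.2 with hquad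
  have hsub : (Finset.univ.filter fun z : (Fin m ↪ Fin n) × (Fin m ↪ Fin n) =>
      ¬ Disjoint (P z.1) (P z.2)) ⊆ quad.biUnion
      (fun x => Finset.univ.filter fun z : (Fin m ↪ Fin n) × (Fin m ↪ Fin n) =>
        z.1 x.1.1 = z.2 x.2.1 ∧ z.1 x.1.2 = z.2 x.2.2) := by
    intro z hz
    simp only [Finset.mem_filter, Finset.mem_univ, true_and] at hz
    obtain ⟨q, hq1, hq2⟩ := Finset.not_disjoint_iff.mp hz
    simp only [P, Finset.mem_image] at hq1 hq2
    obtain ⟨r, hr, hrq⟩ := hq1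
    obtain ⟨r', hr', hrq'⟩ := hq2
    have h1 : (z.1 r.1 : ℕ) ≠ z.1 r.2 := phi_ne z.1 (Fin.ne_of_lt (mem_pairs.mp hr))
    have h2 : (z.2 r'.1 : ℕ) ≠ z.2 r'.2 := phi_ne z.2 (Fin.ne_of_lt (mem_pairs.mp hr'))
    rcases mkUPair_eq_iff h1 h2 (hrq.trans hrq'.symm) with ⟨e1, e2⟩ | ⟨e1, e2⟩
    · refine Finset.mem_biUnion.mpr ⟨((r.1, r.2), r'), ?_, ?_⟩
      · simp [hquad, mem_pairs.mp hr']
      · simp only [Finset.mem_filter, Finset.mem_univ, true_and]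
        exact ⟨Fin.val_injective e1, Fin.val_injective e2⟩
    · refine Finset.mem_biUnion.mpr ⟨((r.2, r.1), r'), ?_, ?_⟩
      · simp [hquad, mem_pairs.mp hr']
      · simp only [Finset.mem_filter, Finset.mem_univ, true_and]
        exact ⟨Fin.val_injective e2, Fin.val_injective e1⟩
  calc (Finset.univ.filter fun z : (Fin m ↪ Fin n) × (Fin m ↪ Fin n) =>
        ¬ Disjoint (P z.1) (P z.2)).card
      ≤ (quad.biUnion _).card := Finset.card_le_card hsub
    _ ≤ ∑ x ∈ quad, (Finset.univ.filter fun z : (Fin m ↪ Fin n) × (Fin m ↪ Fin n) =>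
        z.1 x.1.1 = z.2 x.2.1 ∧ z.1 x.1.2 = z.2 x.2.2).card := Finset.card_biUnion_le
    _ ≤ quad.card * (n.descFactorial m * n ^ (m - 2)) := by
        rw [← smul_eq_mul]
        refine Finset.sum_le_card_nsmul _ _ _ fun x hx => ?_
        exact fiber_card_le x.1.1 x.1.2 x.2.1 x.2.2
          (by simpa [hquad] using (Finset.mem_filter.mp hx).2)

end ERGL
namespace ERGL

variable {m : ℕ} {p : ℝ} {μ : Measure CGraph} [IsProbabilityMeasure μ]

/-- number of quadruples -/
def Q (m : ℕ) : ℕ :=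
  (Finset.univ.filter fun x : (Fin m × Fin m) × (Fin m × Fin m) => x.2.1 < x.2.2).card

lemma cheb (hp0 : 0 ≤ p) (hp1 : p ≤ 1)
    (hind : ProbabilityTheory.iIndepSet edgeEvent μ)
    (hmarg : ∀ q : UPair, μ (edgeEvent q) = ENNReal.ofReal p)
    (F : FinGraph m) {ε : ℝ} (hε : 0 < ε) (n : ℕ) (hn : m ≤ n) :
    μ {G | ε ≤ |X F n G / (n.descFactorial m : ℝ) - theta p F|} ≤
      ENNReal.ofReal ((Q m : ℝ) * (n : ℝ) ^ (m - 2) / (ε ^ 2 * (n.descFactorial m : ℝ))) := by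
  classical
  set D := (n.descFactorial m : ℝ) with hD
  have hDnat : 0 < n.descFactorial m := by
    rcases Nat.eq_zero_or_pos (n.descFactorial m) with h | h
    · exact absurd (Nat.descFactorial_eq_zero_iff_lt.mp h) (not_lt.mpr hn)
    · exact h
  have hD0 : 0 < D := by rw [hD]; exact_mod_cast hDnat
  set c := D * theta p F with hc
  have hexp : ∀ G, (X F n G - c) ^ 2 = X F n G ^ 2 - 2 * c * X F n G + c ^ 2 := by
    intro G; ring
  have hint : Integrable (fun G => (X F n G - c) ^ 2) μ :=
    (((integrable_X_sq F n).sub ((integrable_X F n).const_mul (2 * c))).add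
      (integrable_const (c ^ 2))).congr (Filter.Eventually.of_forall fun G => (hexp G).symm)
  have hmarkov := MeasureTheory.mul_meas_ge_le_integral_of_nonneg
    (Filter.Eventually.of_forall fun G => sq_nonneg (X F n G - c)) hint ((ε * D) ^ 2)
  have hvar : ∫ G, (X F n G - c) ^ 2 ∂μ ≤
      ((Finset.univ.filter fun z : (Fin m ↪ Fin n) × (Fin m ↪ Fin n) =>
        ¬ Disjoint (P z.1) (P z.2)).card : ℝ) := by
    have h1 := var_eq hp0 hp1 hind hmarg F n
    have h2 := sum_le hp0 hp1 hind hmarg F n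
    rw [hc, hD]
    linarith [h1, h2]
  have hbad : ((Finset.univ.filter fun z : (Fin m ↪ Fin n) × (Fin m ↪ Fin n) =>
      ¬ Disjoint (P z.1) (P z.2)).card : ℝ) ≤ (Q m : ℝ) * ((n.descFactorial m : ℝ) * (n : ℝ) ^ (m - 2)) := by
    have := bad_card_le (m := m) (n := n)
    calc ((Finset.univ.filter fun z : (Fin m ↪ Fin n) × (Fin m ↪ Fin n) =>
        ¬ Disjoint (P z.1) (P z.2)).card : ℝ)
        ≤ ((Q m * (n.descFactorial m * n ^ (m - 2)) : ℕ) : ℝ) := by exact_mod_cast this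
      _ = (Q m : ℝ) * ((n.descFactorial m : ℝ) * (n : ℝ) ^ (m - 2)) := by push_cast; ring
  -- the set inclusion
  have hsub : {G | ε ≤ |X F n G / D - theta p F|} ⊆
      {G | (ε * D) ^ 2 ≤ (X F n G - c) ^ 2} := by
    intro G hG
    simp only [Set.mem_setOf_eq] at hG ⊢
    have hrw : X F n G - c = D * (X F n G / D - theta p F) := by
      rw [hc]; field_simp
    have habs : |X F n G - c| = D * |X F n G / D - theta p F| := by
      rw [hrw, abs_mul, abs_of_pos hD0]
    have h1 : ε * D ≤ |X F n G - c| := by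
      rw [habs]
      calc ε * D = D * ε := by ring
        _ ≤ D * |X F n G / D - theta p F| := by
          exact mul_le_mul_of_nonneg_left hG (le_of_lt hD0)
    calc (ε * D) ^ 2 ≤ |X F n G - c| ^ 2 := by
          apply pow_le_pow_left₀ (by positivity) h1
      _ = (X F n G - c) ^ 2 := sq_abs _
  have hεD : 0 < (ε * D) ^ 2 := by positivity
  have hT : (μ {G | (ε * D) ^ 2 ≤ (X F n G - c) ^ 2}).toReal ≤
      (Q m : ℝ) * (n : ℝ) ^ (m - 2) / (ε ^ 2 * D) := by
    have h3 : (ε * D) ^ 2 * (μ {G | (ε * D) ^ 2 ≤ (X F n G - c) ^ 2}).toReal ≤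
        (Q m : ℝ) * ((n.descFactorial m : ℝ) * (n : ℝ) ^ (m - 2)) := by
      calc (ε * D) ^ 2 * (μ {G | (ε * D) ^ 2 ≤ (X F n G - c) ^ 2}).toReal
          ≤ ∫ G, (X F n G - c) ^ 2 ∂μ := hmarkov
        _ ≤ _ := le_trans hvar hbad
    rw [le_div_iff₀ (by positivity)]
    nlinarith [h3, hD0, ENNReal.toReal_nonneg (a := μ {G | (ε * D) ^ 2 ≤ (X F n G - c) ^ 2})]
  calc μ {G | ε ≤ |X F n G / D - theta p F|}
      ≤ μ {G | (ε * D) ^ 2 ≤ (X F n G - c) ^ 2} := measure_mono hsub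
    _ = ENNReal.ofReal ((μ {G | (ε * D) ^ 2 ≤ (X F n G - c) ^ 2}).toReal) :=
        (ENNReal.ofReal_toReal (measure_ne_top μ _)).symm
    _ ≤ ENNReal.ofReal ((Q m : ℝ) * (n : ℝ) ^ (m - 2) / (ε ^ 2 * D)) :=
        ENNReal.ofReal_le_ofReal hT

end ERGL
namespace ERGL

variable {m : ℕ} {p : ℝ} {μ : Measure CGraph} [IsProbabilityMeasure μ]

lemma Q_zero (hm : m ≤ 1) : Q m = 0 := by
  unfold Q
  rw [Finset.card_eq_zero, Finset.filter_eq_empty_iff]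
  intro x _
  intro h
  have h1 := x.2.1.isLt
  have h2 := x.2.2.isLt
  have h3 : (x.2.1 : ℕ) < (x.2.2 : ℕ) := h
  omega

lemma pow_le_descFactorial {n : ℕ} (hn : 2 * m ≤ n) :
    n ^ m ≤ 2 ^ m * n.descFactorial m := by
  have h1 : (n - m) ^ m ≤ n.descFactorial m :=
    le_trans (Nat.pow_le_pow_left (by omega) m) (Nat.pow_sub_le_descFactorial n m)
  calc n ^ m ≤ (2 * (n - m)) ^ m := Nat.pow_le_pow_left (by omega) m
    _ = 2 ^ m * (n - m) ^ m := by rw [Nat.mul_pow]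
    _ ≤ 2 ^ m * n.descFactorial m := Nat.mul_le_mul_left _ h1

lemma c_le {ε : ℝ} (hε : 0 < ε) {n : ℕ} (hn : 2 * m ≤ n) (hn1 : 1 ≤ n) :
    (Q m : ℝ) * (n : ℝ) ^ (m - 2) / (ε ^ 2 * (n.descFactorial m : ℝ)) ≤
      ((Q m : ℝ) * 2 ^ m / ε ^ 2) * (1 / (n : ℝ) ^ 2) := by
  rcases le_or_gt m 1 with hm | hm
  · rw [Q_zero hm]
    push_cast
    simp
  · have hmn : m ≤ n := by omega
    have hDnat : 0 < n.descFactorial m := by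
      rcases Nat.eq_zero_or_pos (n.descFactorial m) with h | h
      · exact absurd (Nat.descFactorial_eq_zero_iff_lt.mp h) (not_lt.mpr hmn)
      · exact h
    have hD0 : (0 : ℝ) < (n.descFactorial m : ℝ) := by exact_mod_cast hDnat
    have hn0 : (0 : ℝ) < (n : ℝ) := by exact_mod_cast hn1
    have hkey : (n : ℝ) ^ (m - 2) * (n : ℝ) ^ 2 ≤ 2 ^ m * (n.descFactorial m : ℝ) := by
      have h1 := pow_le_descFactorial (m := m) hn
      have h2 : ((n ^ m : ℕ) : ℝ) ≤ ((2 ^ m * n.descFactorial m : ℕ) : ℝ) := by exact_mod_cast h1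
      push_cast at h2
      rw [← pow_add]
      have hm' : m - 2 + 2 = m := by omega
      rw [hm']
      exact h2
    have h2 : ((Q m : ℝ) * 2 ^ m / ε ^ 2) * (1 / (n : ℝ) ^ 2) =
        (Q m : ℝ) * 2 ^ m / (ε ^ 2 * (n : ℝ) ^ 2) := by
      field_simp
    rw [h2, div_le_div_iff₀ (by positivity) (by positivity)]
    have hQ : (0 : ℝ) ≤ (Q m : ℝ) := Nat.cast_nonneg _
    nlinarith [sq_nonneg ε, mul_le_mul_of_nonneg_left hkey hQ]

lemma summable_c {ε : ℝ} (hε : 0 < ε) :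
    Summable (fun n : ℕ => if n < 2 * m then (1 : ℝ)
      else (Q m : ℝ) * (n : ℝ) ^ (m - 2) / (ε ^ 2 * (n.descFactorial m : ℝ))) := by
  rw [← summable_nat_add_iff (2 * m)]
  rcases le_or_gt m 1 with hm | hm
  · refine summable_zero.congr fun k => ?_
    rw [if_neg (by omega), Q_zero hm]
    push_cast
    simp
  · have hg : Summable (fun k : ℕ =>
        ((Q m : ℝ) * 2 ^ m / ε ^ 2) * (1 / ((k + 2 * m : ℕ) : ℝ) ^ 2)) := by
      refine Summable.mul_left _ ?_
      exact (summable_nat_add_iff (f := fun n : ℕ => 1 / (n : ℝ) ^ 2) (2 * m)).mpr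
        ((Real.summable_one_div_nat_pow (p := 2)).mpr one_lt_two)
    refine Summable.of_nonneg_of_le (fun k => ?_) (fun k => ?_) hg
    · rw [if_neg (by omega)]
      positivity
    · rw [if_neg (by omega)]
      exact c_le hε (by omega) (by omega)

lemma tsum_ne_top (hp0 : 0 ≤ p) (hp1 : p ≤ 1)
    (hind : ProbabilityTheory.iIndepSet edgeEvent μ)
    (hmarg : ∀ q : UPair, μ (edgeEvent q) = ENNReal.ofReal p)
    (F : FinGraph m) {ε : ℝ} (hε : 0 < ε) :
    (∑' n : ℕ, μ {G | ε ≤ |X F n G / (n.descFactorial m : ℝ) - theta p F|}) ≠ ⊤ := by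
  set c' : ℕ → ℝ := fun n => if n < 2 * m then (1 : ℝ)
    else (Q m : ℝ) * (n : ℝ) ^ (m - 2) / (ε ^ 2 * (n.descFactorial m : ℝ)) with hc'
  have hb : ∀ n : ℕ, μ {G | ε ≤ |X F n G / (n.descFactorial m : ℝ) - theta p F|} ≤
      ENNReal.ofReal (c' n) := by
    intro n
    by_cases hn : n < 2 * m
    · rw [hc']
      simp only [if_pos hn]
      rw [ENNReal.ofReal_one]
      exact prob_le_one
    · rw [hc']
      simp only [if_neg hn]
      exact cheb hp0 hp1 hind hmarg F hε n (by omega)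
  have hnonneg : ∀ n, 0 ≤ c' n := by
    intro n
    rw [hc']
    dsimp only
    split_ifs
    · exact zero_le_one
    · positivity
  have hle : (∑' n : ℕ, μ {G | ε ≤ |X F n G / (n.descFactorial m : ℝ) - theta p F|}) ≤
      ENNReal.ofReal (∑' n, c' n) := by
    rw [ENNReal.ofReal_tsum_of_nonneg hnonneg (summable_c hε)]
    exact ENNReal.tsum_le_tsum hb
  exact ne_top_of_le_ne_top ENNReal.ofReal_ne_top hle

end ERGL

/-- For `Γ ∼ ε_p`, the limiting density of every finite graph `F` exists almost
surely and equals `∏_{i<j} p^{F(i,j)}(1-p)^{1-F(i,j)}`; in particular the graph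
limit of `Γ` is deterministic. -/
theorem erdosRenyi_graph_limit (p : ℝ) (hp0 : 0 ≤ p) (hp1 : p ≤ 1)
    (μ : Measure CGraph) [IsProbabilityMeasure μ]
    (hind : ProbabilityTheory.iIndepSet edgeEvent μ)
    (hmarg : ∀ q : UPair, μ (edgeEvent q) = ENNReal.ofReal p) :
    ∀ (m : ℕ) (F : FinGraph m), ∀ᵐ G ∂μ,
      Filter.Tendsto (fun n => (ind F (restrictG n G) : ℝ) / (Nat.descFactorial n m : ℝ))
        Filter.atTop
        (nhds (∏ q ∈ Finset.univ.filter (fun q : Fin m × Fin m => q.1 < q.2),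
          (if F.1 q.1 q.2 then p else 1 - p))) := by
  intro m F
  have haek : ∀ k : ℕ, ∀ᵐ G ∂μ, ∀ᶠ n in Filter.atTop,
      G ∉ {G | 1 / ((k : ℝ) + 1) ≤
        |ERGL.X F n G / (n.descFactorial m : ℝ) - ERGL.theta p F|} := by
    intro k
    exact MeasureTheory.ae_eventually_notMem
      (ERGL.tsum_ne_top hp0 hp1 hind hmarg F (by positivity))
  have hall := (MeasureTheory.ae_all_iff).mpr haek
  filter_upwards [hall] with G hG
  have hfun : (fun n => (ind F (restrictG n G) : ℝ) / (n.descFactorial m : ℝ)) =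
      fun n => ERGL.X F n G / (n.descFactorial m : ℝ) := by
    funext n
    rw [ERGL.ind_eq]
  rw [hfun]
  have hθ : (∏ q ∈ Finset.univ.filter (fun q : Fin m × Fin m => q.1 < q.2),
      (if F.1 q.1 q.2 then p else 1 - p)) = ERGL.theta p F := rfl
  rw [hθ]
  rw [Metric.tendsto_atTop]
  intro ε hε
  obtain ⟨k, hk⟩ := exists_nat_one_div_lt hε
  obtain ⟨N, hN⟩ := Filter.eventually_atTop.mp (hG k)
  refine ⟨N, fun n hn => ?_⟩
  have h1 := hN n hn
  simp only [Set.mem_setOf_eq, not_le] at h1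
  rw [Real.dist_eq]
  exact lt_trans h1 hk
end

section
/- The Markov transition kernel on finite graphs on [n] given by P(F,F') = α^{↑n₀₀} β^{↑n₀₁} β^{↑n₁₀} α^{↑n₁₁} / ((α+β)^{↑n₀•}(α+β)^{↑n₁•}) is reversible with respect to the probability distribution π(F) = (α+β)^{↑n₀}(α+β)^{↑n₁} / (2α+2β)^{↑C(n,2)}; that is, π(F)P(F,F') = π(F')P(F',F) for all graphs F, F' on [n]. -/
/-- The rising factorial `x^{↑j} = x(x+1)⋯(x+j-1)`. -/
noncomputable def rising (x : ℝ) (j : ℕ) : ℝ := (ascPochhammer ℝ j).eval x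

/-- `n_{rs}`: the number of pairs `i < j` with `F(i,j) = r` and `F'(i,j) = s`. -/
def nPair {n : ℕ} (F F' : FinGraph n) (r s : Bool) : ℕ :=
  (Finset.univ.filter
    (fun q : Fin n × Fin n => q.1 < q.2 ∧ F.1 q.1 q.2 = r ∧ F'.1 q.1 q.2 = s)).card

/-- `n_r`: the number of pairs `i < j` with `F(i,j) = r`. -/
def nSingle {n : ℕ} (F : FinGraph n) (r : Bool) : ℕ :=
  (Finset.univ.filter (fun q : Fin n × Fin n => q.1 < q.2 ∧ F.1 q.1 q.2 = r)).card

/-- The transition kernel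
`P(F,F') = α^{↑n₀₀} β^{↑n₀₁} β^{↑n₁₀} α^{↑n₁₁} / ((α+β)^{↑n₀•}(α+β)^{↑n₁•})`. -/
noncomputable def Pker (α β : ℝ) {n : ℕ} (F F' : FinGraph n) : ℝ :=
  rising α (nPair F F' false false) * rising β (nPair F F' false true) *
      rising β (nPair F F' true false) * rising α (nPair F F' true true) /
    (rising (α + β) (nPair F F' false false + nPair F F' false true) *
      rising (α + β) (nPair F F' true false + nPair F F' true true))

/-- The distribution `π(F) = (α+β)^{↑n₀}(α+β)^{↑n₁} / (2α+2β)^{↑C(n,2)}`. -/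
noncomputable def piDist (α β : ℝ) {n : ℕ} (F : FinGraph n) : ℝ :=
  rising (α + β) (nSingle F false) * rising (α + β) (nSingle F true) /
    rising (2 * α + 2 * β) (n.choose 2)

lemma rising_pos {x : ℝ} (hx : 0 < x) (j : ℕ) : 0 < rising x j :=
  ascPochhammer_pos j x hx

lemma nPair_symm {n : ℕ} (F F' : FinGraph n) (r s : Bool) :
    nPair F' F r s = nPair F F' s r := by
  unfold nPair
  congr 1
  apply Finset.filter_congr
  intro q _
  tauto

lemma nSingle_eq {n : ℕ} (F F' : FinGraph n) (r : Bool) :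
    nSingle F r = nPair F F' r false + nPair F F' r true := by
  unfold nSingle nPair
  rw [← Finset.card_filter_add_card_filter_not
    (p := fun q : Fin n × Fin n => F'.1 q.1 q.2 = false)]
  congr 1
  · rw [Finset.filter_filter]
    apply Finset.card_nbij id (by intro q hq; simp at hq ⊢; tauto)
      (fun _ _ _ _ h => h)
      (by intro q hq; simp at hq; exact ⟨q, by simp; tauto, rfl⟩)
  · rw [Finset.filter_filter]
    apply Finset.card_nbij id
      (by intro q hq; simp [Bool.not_eq_false] at hq ⊢; tauto)
      (fun _ _ _ _ h => h)
      (by intro q hq; simp at hq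
          exact ⟨q, by simp [Bool.not_eq_false]; tauto, rfl⟩)

/-- The kernel `P` is reversible with respect to `π`:
`π(F)P(F,F') = π(F')P(F',F)` for all graphs `F, F'` on `[n]`. -/
theorem Pker_reversible (α β : ℝ) (hα : 0 < α) (hβ : 0 < β) {n : ℕ}
    (F F' : FinGraph n) :
    piDist α β F * Pker α β F F' = piDist α β F' * Pker α β F' F := by
  have h1 := nSingle_eq F F' false
  have h2 := nSingle_eq F F' true
  have h3 := nSingle_eq F' F false
  have h4 := nSingle_eq F' F true
  unfold piDist Pker
  rw [h1, h2, h3, h4, nPair_symm F F' false false, nPair_symm F F' false true,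
    nPair_symm F F' true false, nPair_symm F F' true true]
  have hab : (0:ℝ) < α + β := by linarith
  have h2ab : (0:ℝ) < 2*α + 2*β := by linarith
  have A := (rising_pos hab (nPair F F' false false + nPair F F' false true)).ne'
  have B := (rising_pos hab (nPair F F' true false + nPair F F' true true)).ne'
  have C := (rising_pos hab (nPair F F' false false + nPair F F' true false)).ne'
  have D := (rising_pos hab (nPair F F' false true + nPair F F' true true)).ne'
  have E := (rising_pos h2ab (n.choose 2)).ne'
  field_simp
end
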